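/- If A ⊆ ℤ has positive upper Banach density, then A has the 1-sided sumset property: there exist injective sequences (b_i) and (c_j) of integers such that b_i + c_j ∈ A for all i ≤ j. -/

import Mathlib

open Filter

private def dens (δ : ℝ) (S : Set ℤ) : Prop :=
  ∃ᶠ N : ℕ in Filter.atTop, ∃ m : ℤ, δ * N ≤ ((S ∩ Set.Icc m (m + N)).ncard : ℝ)

private lemma dens_infinite {δ : ℝ} {S : Set ℤ} (hδ : 0 < δ) (h : dens δ S) : S.Infinite := by
  by_contra hinf
  rw [Set.not_infinite] at hinf
  have hfin := hinf
  obtain ⟨N, hN, m, hm⟩ := frequently_atTop.mp h (⌈(S.ncard : ℝ) / δ⌉₊ + 1)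
  have h1 : ((S ∩ Set.Icc m (m + N)).ncard : ℝ) ≤ S.ncard := by
    exact_mod_cast Nat.cast_le.mpr (Set.ncard_le_ncard Set.inter_subset_left hfin)
  have h2 : (S.ncard : ℝ) / δ < N := by
    have := Nat.le_ceil ((S.ncard : ℝ) / δ)
    have hN' : (⌈(S.ncard : ℝ) / δ⌉₊ + 1 : ℝ) ≤ N := by exact_mod_cast Nat.cast_le.mpr hN
    linarith
  rw [div_lt_iff₀ hδ] at h2
  nlinarith

private lemma dens_of_hBD (A : Set ℤ) (d : ℝ) (hd : 0 < d)
    (hBD : Tendsto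
      (fun n : ℕ => ⨆ m : ℤ, ((A ∩ Set.Icc (m + 1) (m + n)).ncard : ℝ) / n)
      atTop (nhds d)) : dens (d/2) A := by
  have hev : ∀ᶠ n : ℕ in atTop,
      d/2 < ⨆ m : ℤ, ((A ∩ Set.Icc (m + 1) (m + n)).ncard : ℝ) / n :=
    hBD.eventually (eventually_gt_nhds (by linarith))
  refine ((hev.and (eventually_ge_atTop 1)).frequently).mono ?_
  rintro n ⟨h1, h2⟩
  obtain ⟨m, hm⟩ := exists_lt_of_lt_ciSup h1
  refine ⟨m + 1, ?_⟩
  have hn : (0:ℝ) < n := by exact_mod_cast h2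
  have hmul : d/2 * n ≤ ((A ∩ Set.Icc (m+1) (m + n)).ncard : ℝ) := by
    rw [lt_div_iff₀ hn] at hm
    linarith
  refine hmul.trans ?_
  have hsub : A ∩ Set.Icc (m+1) (m + n) ⊆ A ∩ Set.Icc (m+1) ((m+1) + n) := by
    apply Set.inter_subset_inter_right
    apply Set.Icc_subset_Icc_right
    omega
  exact_mod_cast Nat.cast_le.mpr (Set.ncard_le_ncard hsub
    (Set.Finite.inter_of_right (Set.finite_Icc _ _) A))

private lemma key_step (S : Set ℤ) (δ : ℝ) (K N : ℕ) (m : ℤ)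
    (hK0 : 0 < K) (hK : 2 ≤ δ * K) (hN : 2 * K^3 + 4*K + 2 ≤ N)
    (hcount : δ * N ≤ ((S ∩ Set.Icc m (m + N)).ncard : ℝ)) :
    ∃ u : ℤ, 0 < u ∧ u ≤ K ∧ ∃ m' : ℤ,
      (1 / (2 * (K:ℝ)^3)) * ((N + 2*K : ℕ) : ℝ) ≤
        (((S ∩ {x | x + u ∈ S}) ∩ Set.Icc m' (m' + (N + 2*K : ℕ))).ncard : ℝ) := by
  classical
  set F : Finset ℤ := (Finset.Icc m (m + N)).filter (· ∈ S) with hFdef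
  have hFcard : ((S ∩ Set.Icc m (m + N)).ncard : ℝ) = F.card := by
    have hset : S ∩ Set.Icc m (m + N) = ↑F := by
      ext x
      simp only [hFdef, Set.mem_inter_iff, Set.mem_Icc, Finset.coe_filter,
        Finset.mem_Icc, Set.mem_setOf_eq]
      tauto
    rw [hset, Set.ncard_coe_finset]
  rw [hFcard] at hcount
  have hFsub : ∀ y ∈ F, y ∈ S ∧ m ≤ y ∧ y ≤ m + N := by
    intro y hy
    simp only [hFdef, Finset.mem_filter, Finset.mem_Icc] at hy
    tauto
  set X : Finset ℤ := Finset.Icc (m - K) (m + N) with hXdef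
  have hXcard : X.card = N + K + 1 := by
    rw [hXdef, Int.card_Icc]; omega
  set Tx : ℤ → Finset ℕ := fun x => (Finset.range K).filter (fun t => x + (t:ℤ) ∈ F) with hTdef
  set f : ℤ → ℕ := fun x => (Tx x).card with hfdef
  have hfK : ∀ x, f x ≤ K := fun x =>
    (Finset.card_filter_le _ _).trans (Finset.card_range K).le
  -- Step 1 : ∑ x ∈ X, f x = K * F.card
  have step1 : ∑ x ∈ X, f x = K * F.card := by
    have hswap : ∑ x ∈ X, f x
        = ∑ t ∈ Finset.range K, (X.filter (fun x => x + (t:ℤ) ∈ F)).card := by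
      simp only [hfdef, hTdef, Finset.card_filter]
      rw [Finset.sum_comm]
    rw [hswap]
    have hper : ∀ t ∈ Finset.range K,
        (X.filter (fun x => x + (t:ℤ) ∈ F)).card = F.card := by
      intro t ht
      rw [Finset.mem_range] at ht
      apply Finset.card_bij' (fun x _ => x + (t:ℤ)) (fun y _ => y - (t:ℤ))
      · intro x hx
        exact (Finset.mem_filter.mp hx).2
      · intro y hy
        obtain ⟨_, hy1, hy2⟩ := hFsub y hy
        rw [Finset.mem_filter]
        constructor
        · rw [hXdef, Finset.mem_Icc]
          have : (t:ℤ) < K := by exact_mod_cast ht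
          omega
        · simpa using hy
      · intro x _; ring
      · intro y _; ring
    rw [Finset.sum_congr rfl hper, Finset.sum_const, Finset.card_range, smul_eq_mul]
  -- Step 2
  set X2 : Finset ℤ := X.filter (fun x => 2 ≤ f x) with hX2def
  have step2 : ∑ x ∈ X, f x ≤ K * X2.card + X.card := by
    rw [← Finset.sum_filter_add_sum_filter_not X (fun x => 2 ≤ f x)]
    have A1 : ∑ x ∈ X2, f x ≤ X2.card * K :=
      Finset.sum_le_card_nsmul _ _ K (fun x _ => hfK x)
    have A2 : ∑ x ∈ X.filter (fun x => ¬ 2 ≤ f x), f x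
        ≤ (X.filter (fun x => ¬ 2 ≤ f x)).card * 1 := by
      apply Finset.sum_le_card_nsmul
      intro x hx
      have := (Finset.mem_filter.mp hx).2
      omega
    have A3 : (X.filter (fun x => ¬ 2 ≤ f x)).card ≤ X.card := Finset.card_filter_le _ _
    calc ∑ x ∈ X2, f x + ∑ x ∈ X.filter (fun x => ¬ 2 ≤ f x), f x
        ≤ X2.card * K + (X.filter (fun x => ¬ 2 ≤ f x)).card * 1 := by
          exact Nat.add_le_add A1 A2
      _ ≤ K * X2.card + X.card := by rw [mul_comm]; omega
  have hM : ((N:ℝ) - K - 1) ≤ (K : ℝ) * X2.card := by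
    have hc1 : (K:ℕ) * F.card ≤ K * X2.card + (N + K + 1) := by
      rw [← step1, ← hXcard]; exact step2
    have hc1' : (K:ℝ) * F.card ≤ (K:ℝ) * X2.card + ((N:ℝ) + K + 1) := by
      exact_mod_cast hc1
    have hc2 : (2:ℝ) * N ≤ (K:ℝ) * F.card := by
      have hKpos : (0:ℝ) < K := by exact_mod_cast hK0
      have hNpos : (0:ℝ) ≤ N := by positivity
      nlinarith
    linarith
  -- pigeonhole setup
  set n : ℕ := ⌈(1 / (2 * (K:ℝ)^3)) * ((N + 2*K : ℕ) : ℝ)⌉₊ with hndef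
  have hKR : (0:ℝ) < K := by exact_mod_cast hK0
  have hNN : (0:ℝ) ≤ (1 / (2 * (K:ℝ)^3)) * ((N + 2*K : ℕ) : ℝ) := by positivity
  have hnlt : (n:ℝ) < (1 / (2 * (K:ℝ)^3)) * ((N + 2*K : ℕ) : ℝ) + 1 :=
    Nat.ceil_lt_add_one hNN
  have hn2 : ((K:ℝ) * K) * n ≤ X2.card := by
    have hcast : ((N + 2*K : ℕ) : ℝ) = (N:ℝ) + 2*K := by push_cast; ring
    rw [hcast] at hnlt
    have hNb : (2:ℝ) * K^3 + 4*K + 2 ≤ N := by exact_mod_cast hN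
    have e1 : 2*(K:ℝ)^3 * n < (N + 2*K) + 2*K^3 := by
      have h2K : (0:ℝ) < 2*(K:ℝ)^3 := by positivity
      have := mul_lt_mul_of_pos_left hnlt h2K
      calc 2*(K:ℝ)^3 * n < 2*(K:ℝ)^3 * ((1 / (2 * (K:ℝ)^3)) * ((N:ℝ) + 2*K) + 1) := this
        _ = (N + 2*K) + 2*K^3 := by field_simp
    have e2 : (K:ℝ)^3 * n ≤ (N:ℝ) - K - 1 := by nlinarith
    have e3 : (K:ℝ) * (((K:ℝ)*K) * n) ≤ (K:ℝ) * X2.card := by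
      calc (K:ℝ) * (((K:ℝ)*K) * n) = (K:ℝ)^3 * n := by ring
        _ ≤ (N:ℝ) - K - 1 := e2
        _ ≤ (K:ℝ) * X2.card := hM
    exact le_of_mul_le_mul_left e3 hKR
  have hn2' : (Finset.range K ×ˢ Finset.range K).card * n ≤ X2.card := by
    have : ((K * K * n : ℕ) : ℝ) ≤ (X2.card : ℝ) := by push_cast; nlinarith [hn2]
    have h := Nat.cast_le.mp this
    simpa [Finset.card_product, Finset.card_range] using h
  -- the pair-selecting function
  set g : ℤ → ℕ × ℕ := fun x =>
    if h : (Tx x).Nonempty then ((Tx x).min' h, (Tx x).max' h) else (0, 0) with hgdef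
  have hgx : ∀ x ∈ X2, (g x).1 ∈ Tx x ∧ (g x).2 ∈ Tx x ∧ (g x).1 < (g x).2 := by
    intro x hx
    have h2 : 2 ≤ (Tx x).card := (Finset.mem_filter.mp hx).2
    have hne : (Tx x).Nonempty := Finset.card_pos.mp (by omega)
    simp only [hgdef, dif_pos hne]
    exact ⟨(Tx x).min'_mem hne, (Tx x).max'_mem hne,
      Finset.min'_lt_max'_of_card _ (by omega)⟩
  have hmaps : ∀ x ∈ X2, g x ∈ Finset.range K ×ˢ Finset.range K := by
    intro x hx
    obtain ⟨h1, h2, _⟩ := hgx x hx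
    rw [Finset.mem_product]
    exact ⟨(Finset.mem_filter.mp h1).1, (Finset.mem_filter.mp h2).1⟩
  -- apply pigeonhole
  have hne : (Finset.range K ×ˢ Finset.range K).Nonempty := by
    rw [Finset.nonempty_product]
    exact ⟨Finset.nonempty_range_iff.mpr (by omega), Finset.nonempty_range_iff.mpr (by omega)⟩
  obtain ⟨⟨t, t'⟩, hpair, hfib⟩ :=
    Finset.exists_le_card_fiber_of_mul_le_card_of_maps_to hmaps hne hn2'
  set Y : Finset ℤ := X2.filter (fun x => g x = (t, t')) with hYdef
  -- Y is nonempty since n ≥ 1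
  have hn1 : 1 ≤ n := by
    rw [hndef]
    apply Nat.one_le_ceil_iff.mpr
    positivity
  obtain ⟨x0, hx0⟩ := Finset.card_pos.mp (lt_of_lt_of_le hn1 hfib)
  have hx0' := Finset.mem_filter.mp hx0
  have hgx0 := hgx x0 hx0'.1
  have htt' : t < t' := by
    rw [hx0'.2] at hgx0
    exact hgx0.2.2
  have httK : t' < K := by
    rw [Finset.mem_product, Finset.mem_range, Finset.mem_range] at hpair
    exact hpair.2
  refine ⟨(t' : ℤ) - t, by omega, by omega, m - K, ?_⟩
  -- the image of Y under (· + t) lands in the target set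
  set S' : Set ℤ := S ∩ {x | x + ((t' : ℤ) - t) ∈ S} with hS'def
  have himg : ↑(Y.image (· + (t:ℤ))) ⊆ S' ∩ Set.Icc (m - K) ((m - K) + (N + 2*K : ℕ)) := by
    intro y hy
    simp only [Finset.coe_image, Set.mem_image, Finset.mem_coe] at hy
    obtain ⟨x, hx, rfl⟩ := hy
    have hxf := Finset.mem_filter.mp hx
    have hg := hgx x hxf.1
    rw [hxf.2] at hg
    obtain ⟨ht1, ht2, _⟩ := hg
    have hXmem : x ∈ X := Finset.mem_of_mem_filter _ hxf.1
    rw [hXdef, Finset.mem_Icc] at hXmem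
    have hF1 := (Finset.mem_filter.mp ht1).2
    have hF2 := (Finset.mem_filter.mp ht2).2
    obtain ⟨hS1, _, _⟩ := hFsub _ hF1
    obtain ⟨hS2, _, _⟩ := hFsub _ hF2
    constructor
    · refine ⟨hS1, ?_⟩
      show x + (t:ℤ) + ((t':ℤ) - t) ∈ S
      have : x + (t:ℤ) + ((t':ℤ) - t) = x + (t':ℤ) := by ring
      rw [this]; exact hS2
    · rw [Set.mem_Icc]
      have htK : (t:ℤ) < K := by exact_mod_cast lt_trans htt' httK
      push_cast
      omega
  have hYcard : (Y.image (· + (t:ℤ))).card = Y.card :=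
    Finset.card_image_of_injective _ (add_left_injective _)
  have hfin : (S' ∩ Set.Icc (m - K) ((m - K) + (N + 2*K : ℕ))).Finite :=
    Set.Finite.inter_of_right (Set.finite_Icc _ _) _
  have hle : (Y.card : ℝ) ≤ ((S' ∩ Set.Icc (m - K) ((m - K) + (N + 2*K : ℕ))).ncard : ℝ) := by
    have := Set.ncard_le_ncard himg hfin
    rw [Set.ncard_coe_finset, hYcard] at this
    exact_mod_cast this
  refine le_trans ?_ hle
  calc (1 / (2 * (K:ℝ)^3)) * ((N + 2*K : ℕ) : ℝ) ≤ n := Nat.le_ceil _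
    _ ≤ Y.card := by exact_mod_cast hfib

private lemma key (S : Set ℤ) (δ : ℝ) (hδ : 0 < δ) (hdens : dens δ S) :
    ∃ (u : ℤ) (δ' : ℝ), 0 < u ∧ 0 < δ' ∧ dens δ' (S ∩ {x | x + u ∈ S}) := by
  set K : ℕ := ⌈2/δ⌉₊ + 1 with hKdef
  have hK0 : 0 < K := Nat.succ_pos _
  have hK : 2 ≤ δ * K := by
    have h1 : 2/δ ≤ (K:ℝ) := by
      have := Nat.le_ceil (2/δ)
      have h2 : ((⌈2/δ⌉₊ : ℝ)) ≤ K := by exact_mod_cast Nat.le_succ _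
      linarith
    calc (2:ℝ) = δ * (2/δ) := by field_simp
      _ ≤ δ * K := by apply mul_le_mul_of_nonneg_left h1 hδ.le
  set δ' : ℝ := 1 / (2 * (K:ℝ)^3) with hδ'def
  have hδ'pos : 0 < δ' := by positivity
  set Q : ℤ → ℕ → Prop := fun u b => ∃ m' : ℤ,
      δ' * (b : ℝ) ≤ (((S ∩ {x | x + u ∈ S}) ∩ Set.Icc m' (m' + b)).ncard : ℝ) with hQdef
  have H : ∃ᶠ N : ℕ in atTop, ∃ u : ℤ, 0 < u ∧ u ≤ K ∧ Q u (N + 2*K) := by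
    refine ((hdens.and_eventually (eventually_ge_atTop (2*K^3 + 4*K + 2))).mono ?_)
    rintro N ⟨⟨m, hm⟩, hN⟩
    obtain ⟨u, hu1, hu2, m', hm'⟩ := key_step S δ K N m hK0 hK hN hm
    exact ⟨u, hu1, hu2, m', hm'⟩
  have Hu : ∃ u : ℤ, 0 < u ∧ u ≤ K ∧ ∃ᶠ N : ℕ in atTop, Q u (N + 2*K) := by
    by_contra hc
    push_neg at hc
    have hev : ∀ᶠ N : ℕ in atTop, ∀ u ∈ Set.Icc (1:ℤ) K, ¬ Q u (N + 2*K) := by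
      rw [eventually_all_finite (Set.finite_Icc (1:ℤ) K)]
      intro u hu
      rw [Set.mem_Icc] at hu
      have := hc u (by omega) hu.2
      exact this
    obtain ⟨N, ⟨u, hu1, hu2, hQu⟩, hall⟩ := (H.and_eventually hev).exists
    exact hall u (Set.mem_Icc.mpr ⟨by omega, hu2⟩) hQu
  obtain ⟨u, hu1, hu2, hfreq⟩ := Hu
  refine ⟨u, δ', hu1, hδ'pos, ?_⟩
  rw [dens, frequently_atTop]
  intro a
  obtain ⟨N, hNa, hQN⟩ := frequently_atTop.mp hfreq a
  exact ⟨N + 2*K, by omega, hQN⟩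

/-- If `A ⊆ ℤ` has positive upper Banach density (the limit as `n → ∞` of
`sup_m |A ∩ [m+1, m+n]| / n` exists and is positive), then `A` has the 1-sided
sumset property: there are injective sequences `(bᵢ)` and `(cⱼ)` with
`bᵢ + cⱼ ∈ A` for all `i ≤ j`. -/
theorem stmt0 (A : Set ℤ) (d : ℝ) (hd : 0 < d)
    (hBD : Filter.Tendsto
      (fun n : ℕ => ⨆ m : ℤ, ((A ∩ Set.Icc (m + 1) (m + n)).ncard : ℝ) / n)
      Filter.atTop (nhds d)) :
    ∃ b c : ℕ → ℤ, Function.Injective b ∧ Function.Injective c ∧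
      ∀ i j : ℕ, i ≤ j → b i + c j ∈ A := by
  have hA : dens (d/2) A := dens_of_hBD A d hd hBD
  have key' : ∀ p : {p : Set ℤ × ℝ // 0 < p.2 ∧ dens p.2 p.1},
      ∃ (u : ℤ) (q : {p : Set ℤ × ℝ // 0 < p.2 ∧ dens p.2 p.1}),
        0 < u ∧ q.1.1 = p.1.1 ∩ {x | x + u ∈ p.1.1} := by
    rintro ⟨⟨S, δ⟩, hδ, hdens⟩
    obtain ⟨u, δ', hu, hδ', hd'⟩ := key S δ hδ hdens
    exact ⟨u, ⟨(S ∩ {x | x + u ∈ S}, δ'), hδ', hd'⟩, hu, rfl⟩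
  choose uf qf huf hqf using key'
  set p0 : {p : Set ℤ × ℝ // 0 < p.2 ∧ dens p.2 p.1} := ⟨(A, d/2), by positivity, hA⟩ with hp0
  set G : ℕ → {p : Set ℤ × ℝ // 0 < p.2 ∧ dens p.2 p.1} :=
    fun n => Nat.rec (motive := fun _ => _) p0 (fun _ p => qf p) n with hG
  set Sn : ℕ → Set ℤ := fun n => (G n).1.1 with hSn
  set t : ℕ → ℤ := fun n => uf (G n) with htdef
  have hS0 : Sn 0 = A := rfl
  have hGsucc : ∀ n, Sn (n+1) = Sn n ∩ {x | x + t n ∈ Sn n} := fun n => hqf (G n)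
  have ht : ∀ n, 0 < t n := fun n => huf (G n)
  have hSinf : ∀ n, (Sn n).Infinite := fun n => dens_infinite (G n).2.1 (G n).2.2
  set b : ℕ → ℤ := fun n => ∑ i ∈ Finset.range n, t i with hb
  have hbsucc : ∀ n, b (n+1) = b n + t n := fun n => Finset.sum_range_succ _ _
  have hbmono : StrictMono b := by
    apply strictMono_nat_of_lt_succ
    intro n
    rw [hbsucc n]
    have := ht n
    omega
  have hmain : ∀ n, ∀ x ∈ Sn n, ∀ k ≤ n, x + b k ∈ A := by
    intro n
    induction n with
    | zero =>
      intro x hx k hk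
      have hk0 : k = 0 := Nat.le_zero.mp hk
      subst hk0
      have hb0 : b 0 = 0 := rfl
      rw [hb0, add_zero]
      exact hx
    | succ n ih =>
      intro x hx k hk
      rw [hGsucc n] at hx
      rcases Nat.lt_or_ge k (n+1) with h | h
      · exact ih x hx.1 k (by omega)
      · have hk' : k = n + 1 := by omega
        subst hk'
        rw [hbsucc n]
        have heq : x + (b n + t n) = (x + t n) + b n := by ring
        rw [heq]
        exact ih (x + t n) hx.2 n le_rfl
  -- construction of c
  have hpick : ∀ (j : ℕ) (u : Finset ℤ), ∃ x, x ∈ Sn j ∧ x ∉ u := by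
    intro j u
    obtain ⟨x, h1, h2⟩ := (hSinf j).exists_notMem_finset u
    exact ⟨x, h1, h2⟩
  choose pick hp using hpick
  set H : ℕ → ℤ × Finset ℤ := fun j => Nat.rec (motive := fun _ => ℤ × Finset ℤ)
      (pick 0 ∅, {pick 0 ∅}) (fun j p => (pick (j+1) p.2, insert (pick (j+1) p.2) p.2)) j with hH
  set c : ℕ → ℤ := fun j => (H j).1 with hc
  have hcsucc : ∀ j, c (j+1) = pick (j+1) (H j).2 := fun j => rfl
  have hHsucc : ∀ j, (H (j+1)).2 = insert (c (j+1)) (H j).2 := fun j => rfl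
  have hc0 : ∀ j, c j ∈ Sn j := by
    intro j
    cases j with
    | zero => exact (hp 0 ∅).1
    | succ j => exact (hp (j+1) (H j).2).1
  have hmem : ∀ i j, i ≤ j → c i ∈ (H j).2 := by
    intro i j hij
    induction j with
    | zero =>
      have : i = 0 := by omega
      subst this
      exact Finset.mem_singleton_self _
    | succ j ihj =>
      rcases Nat.lt_or_ge i (j+1) with h | h
      · rw [hHsucc j]
        exact Finset.mem_insert_of_mem (ihj (by omega))
      · have : i = j + 1 := by omega
        subst this
        rw [hHsucc j]
        exact Finset.mem_insert_self _ _
  have hcinj : Function.Injective c := by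
    have hne : ∀ i j, i < j → c i ≠ c j := by
      intro i j hij he
      obtain ⟨k, rfl⟩ : ∃ k, j = k + 1 := ⟨j - 1, by omega⟩
      have h1 : c i ∈ (H k).2 := hmem i k (by omega)
      have h2 : c (k+1) ∉ (H k).2 := by
        rw [hcsucc k]
        exact (hp (k+1) (H k).2).2
      rw [he] at h1
      exact h2 h1
    intro i j he
    rcases lt_trichotomy i j with h | h | h
    · exact absurd he (hne i j h)
    · exact h
    · exact absurd he.symm (hne j i h)
  refine ⟨b, c, hbmono.injective, hcinj, ?_⟩
  intro i j hij
  have := hmain j (c j) (hc0 j) i hij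
  rw [add_comm]
  exact this
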